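/- Let Q be a symmetric positive semidefinite N×N real matrix with Moore–Penrose pseudo-inverse Q⁺, and let y ∈ ℝ^N. Then the Fenchel conjugate of the function f(z) = (1/2)⟨y − z, Q(y − z)⟩ is given by f*(v) = ⟨v, y⟩ + (1/2)⟨v, Q⁺ v⟩ if v ∈ Range(Q), and f*(v) = +∞ otherwise. -/

import Mathlib

open Matrix

noncomputable section

/-- Fenchel conjugate `f*(v) = sup_x ⟨v,x⟩ - f(x)`. -/
def fconj {N : ℕ} (f : (Fin N → ℝ) → EReal) (v : Fin N → ℝ) : EReal :=
  ⨆ x : Fin N → ℝ, ((v ⬝ᵥ x : ℝ) : EReal) - f x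

/-- `Ap` is the Moore–Penrose pseudo-inverse of `A` (Penrose equations). -/
def IsMoorePenrose {m n : ℕ} (A : Matrix (Fin m) (Fin n) ℝ)
    (Ap : Matrix (Fin n) (Fin m) ℝ) : Prop :=
  A * Ap * A = A ∧ Ap * A * Ap = Ap ∧ (A * Ap)ᵀ = A * Ap ∧ (Ap * A)ᵀ = Ap * A

/-- Conjugate of the degenerate quadratic
`f(z) = (1/2)⟨y - z, Q(y - z)⟩` for `Q` symmetric positive semidefinite:
`f*(v) = ⟨v,y⟩ + (1/2)⟨v, Q⁺v⟩` if `v ∈ Range(Q)`, and `f*(v) = +∞` otherwise. -/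
theorem stmt_14 {N : ℕ} (Q Qp : Matrix (Fin N) (Fin N) ℝ)
    (hQ : Q.PosSemidef) (hQp : IsMoorePenrose Q Qp)
    (y : Fin N → ℝ) :
    (∀ v : Fin N → ℝ, (∃ w : Fin N → ℝ, Q *ᵥ w = v) →
      fconj (fun z => ((1 / 2 * ((y - z) ⬝ᵥ (Q *ᵥ (y - z))) : ℝ) : EReal)) v =
        ((v ⬝ᵥ y + 1 / 2 * (v ⬝ᵥ (Qp *ᵥ v)) : ℝ) : EReal)) ∧
    (∀ v : Fin N → ℝ, (¬ ∃ w : Fin N → ℝ, Q *ᵥ w = v) →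
      fconj (fun z => ((1 / 2 * ((y - z) ⬝ᵥ (Q *ᵥ (y - z))) : ℝ) : EReal)) v = ⊤) := by
  have hQsym : Qᵀ = Q := by simpa [Matrix.IsHermitian] using hQ.1
  have hpos : ∀ x : Fin N → ℝ, 0 ≤ x ⬝ᵥ Q *ᵥ x := fun x => by simpa using hQ.dotProduct_mulVec_nonneg x
  have hsymdot : ∀ a u : Fin N → ℝ, a ⬝ᵥ Q *ᵥ u = (Q *ᵥ a) ⬝ᵥ u := fun a u => by
    rw [Matrix.dotProduct_mulVec, ← Matrix.mulVec_transpose, hQsym]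
  have hflip : ∀ (M : Matrix (Fin N) (Fin N) ℝ) (a b : Fin N → ℝ),
      (M *ᵥ a) ⬝ᵥ b = a ⬝ᵥ (Mᵀ *ᵥ b) := by
    intro M a b
    rw [dotProduct_comm, Matrix.dotProduct_mulVec, ← Matrix.mulVec_transpose,
      dotProduct_comm]
  have hval : ∀ v z : Fin N → ℝ,
      ((v ⬝ᵥ z : ℝ) : EReal) - ((1 / 2 * ((y - z) ⬝ᵥ (Q *ᵥ (y - z))) : ℝ) : EReal)
        = ((v ⬝ᵥ z - 1 / 2 * ((y - z) ⬝ᵥ (Q *ᵥ (y - z))) : ℝ) : EReal) := fun v z => by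
    rw [← EReal.coe_sub]
  constructor
  · rintro v ⟨w, hw⟩
    set a : Fin N → ℝ := Qp *ᵥ v with ha
    have hQa : Q *ᵥ a = v := by
      rw [ha, ← hw, Matrix.mulVec_mulVec, Matrix.mulVec_mulVec, hQp.1]
    have hub : ∀ z : Fin N → ℝ, v ⬝ᵥ z - 1 / 2 * ((y - z) ⬝ᵥ (Q *ᵥ (y - z)))
        ≤ v ⬝ᵥ y + 1 / 2 * (v ⬝ᵥ (Qp *ᵥ v)) := by
      intro z
      have h0 := hpos ((z - y) - a)
      have h2 : a ⬝ᵥ Q *ᵥ (z - y) = v ⬝ᵥ (z - y) := by rw [hsymdot, hQa]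
      have h2' : a ⬝ᵥ Q *ᵥ z - a ⬝ᵥ Q *ᵥ y = v ⬝ᵥ z - v ⬝ᵥ y := by
        simpa [Matrix.mulVec_sub, dotProduct_sub] using h2
      have h3 : (z - y) ⬝ᵥ Q *ᵥ a = v ⬝ᵥ (z - y) := by
        rw [hQa]; exact dotProduct_comm _ _
      have h3' : z ⬝ᵥ Q *ᵥ a - y ⬝ᵥ Q *ᵥ a = v ⬝ᵥ z - v ⬝ᵥ y := by
        simpa [sub_dotProduct, dotProduct_sub] using h3
      have h4 : a ⬝ᵥ Q *ᵥ a = v ⬝ᵥ a := by rw [hsymdot, hQa]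
      have e1 : ((z - y) - a) ⬝ᵥ Q *ᵥ ((z - y) - a)
          = (z - y) ⬝ᵥ Q *ᵥ (z - y) - 2 * (v ⬝ᵥ (z - y)) + v ⬝ᵥ a := by
        simp only [Matrix.mulVec_sub, dotProduct_sub, sub_dotProduct,
          dotProduct_sub]
        linarith [h2', h3', h4]
      have e2 : (y - z) ⬝ᵥ Q *ᵥ (y - z) = (z - y) ⬝ᵥ Q *ᵥ (z - y) := by
        have h5 : y - z = -(z - y) := by ring
        rw [h5, Matrix.mulVec_neg, neg_dotProduct, dotProduct_neg, neg_neg]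
      have e3 : v ⬝ᵥ z = v ⬝ᵥ y + v ⬝ᵥ (z - y) := by
        rw [dotProduct_sub]; ring
      have hva : v ⬝ᵥ (Qp *ᵥ v) = v ⬝ᵥ a := rfl
      rw [e2, e3, hva]
      rw [e1] at h0
      nlinarith [h0]
    have hz0 : v ⬝ᵥ (y + a) - 1 / 2 * ((y - (y + a)) ⬝ᵥ (Q *ᵥ (y - (y + a))))
        = v ⬝ᵥ y + 1 / 2 * (v ⬝ᵥ (Qp *ᵥ v)) := by
      have h4 : a ⬝ᵥ Q *ᵥ a = v ⬝ᵥ a := by rw [hsymdot, hQa]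
      have h5 : y - (y + a) = -a := by ring
      have hva : v ⬝ᵥ (Qp *ᵥ v) = v ⬝ᵥ a := rfl
      rw [h5, Matrix.mulVec_neg, neg_dotProduct, dotProduct_neg, neg_neg,
        dotProduct_add, h4, hva]
      ring
    apply le_antisymm
    · apply iSup_le
      intro z
      rw [hval v z]
      exact_mod_cast EReal.coe_le_coe_iff.mpr (hub z)
    · calc ((v ⬝ᵥ y + 1 / 2 * (v ⬝ᵥ (Qp *ᵥ v)) : ℝ) : EReal)
          = ((v ⬝ᵥ (y + a) : ℝ) : EReal)
            - ((1 / 2 * ((y - (y + a)) ⬝ᵥ (Q *ᵥ (y - (y + a)))) : ℝ) : EReal) := by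
            rw [hval v (y + a), hz0]
        _ ≤ _ := le_iSup (fun x : Fin N → ℝ => ((v ⬝ᵥ x : ℝ) : EReal)
            - ((1 / 2 * ((y - x) ⬝ᵥ (Q *ᵥ (y - x))) : ℝ) : EReal)) (y + a)
  · rintro v hv
    set P : Matrix (Fin N) (Fin N) ℝ := Q * Qp with hP
    set u : Fin N → ℝ := v - P *ᵥ v with hu
    have hPQ : P * Q = Q := hQp.1
    have hPP : P * P = P := by
      rw [hP, ← Matrix.mul_assoc, hQp.1]
    have hPsym : Pᵀ = P := hQp.2.2.1
    have huQ : ∀ x : Fin N → ℝ, u ⬝ᵥ Q *ᵥ x = 0 := by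
      intro x
      have h1 : (P *ᵥ v) ⬝ᵥ Q *ᵥ x = v ⬝ᵥ Q *ᵥ x := by
        rw [hflip, hPsym, Matrix.mulVec_mulVec, hPQ]
      rw [hu, sub_dotProduct, h1, sub_self]
    have hvu : v ⬝ᵥ u = u ⬝ᵥ u := by
      have hPu : P *ᵥ u = 0 := by
        rw [hu, Matrix.mulVec_sub, Matrix.mulVec_mulVec, hPP, sub_self]
      have h1 : (P *ᵥ v) ⬝ᵥ u = 0 := by
        rw [hflip, hPsym, hPu, dotProduct_zero]
      calc v ⬝ᵥ u = (u + P *ᵥ v) ⬝ᵥ u := by rw [hu]; congr 1; ring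
        _ = u ⬝ᵥ u := by rw [add_dotProduct, h1, add_zero]
    have hune : u ≠ 0 := by
      intro h
      apply hv
      refine ⟨Qp *ᵥ v, ?_⟩
      rw [Matrix.mulVec_mulVec, ← hP]
      have h2 : v - P *ᵥ v = 0 := hu ▸ h
      exact (sub_eq_zero.mp h2).symm
    have huu : 0 < u ⬝ᵥ u := by
      rcases lt_or_eq_of_le (by simpa using dotProduct_self_star_nonneg u :
        (0:ℝ) ≤ u ⬝ᵥ u) with h1 | h1
      · exact h1
      · exact absurd (dotProduct_self_eq_zero.mp h1.symm) hune
    rw [fconj, iSup_eq_top]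
    intro b hb
    induction b using EReal.rec with
    | bot => exact ⟨y, by rw [hval]; exact EReal.bot_lt_coe _⟩
    | top => exact absurd hb (lt_irrefl _)
    | coe c =>
      set t : ℝ := (c - v ⬝ᵥ y) / (u ⬝ᵥ u) + 1 with ht
      refine ⟨y + t • u, ?_⟩
      rw [hval]
      have h5 : y - (y + t • u) = -(t • u) := by ring
      have hvalr : v ⬝ᵥ (y + t • u) - 1 / 2 * ((y - (y + t • u)) ⬝ᵥ (Q *ᵥ (y - (y + t • u))))
          = v ⬝ᵥ y + t * (u ⬝ᵥ u) := by
        rw [h5, Matrix.mulVec_neg, neg_dotProduct, dotProduct_neg, neg_neg,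
          dotProduct_add]
        simp only [Matrix.mulVec_smul, smul_dotProduct, dotProduct_smul,
          smul_eq_mul, huQ u, hvu]
        ring
      rw [hvalr]
      apply EReal.coe_lt_coe_iff.mpr
      have : t * (u ⬝ᵥ u) = c - v ⬝ᵥ y + u ⬝ᵥ u := by
        rw [ht, add_mul, div_mul_cancel₀ _ huu.ne']; ring
      rw [this]; linarith
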